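/- Let Γ be a simple directed graph with at most one directed edge between any pair of vertices, containing no oriented cycles, and let w be a word whose content is all of V(Γ), with |V(Γ)| = n. Then [w]^n is the zero (absorbing) element of HK_Γ. -/

import Mathlib

/-- One-step Hecke-Kiselman edge relations for a directed graph with edge relation `E`. -/
def HKRel {V : Type*} (E : V → V → Prop) : FreeMonoid V → FreeMonoid V → Prop := fun a b =>
  (∃ x : V, a = FreeMonoid.of x * FreeMonoid.of x ∧ b = FreeMonoid.of x) ∨
  (∃ x y : V, x ≠ y ∧ ¬ E x y ∧ ¬ E y x ∧
    a = FreeMonoid.of x * FreeMonoid.of y ∧ b = FreeMonoid.of y * FreeMonoid.of x) ∨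
  (∃ x y : V, E x y ∧ ¬ E y x ∧
    a = FreeMonoid.of x * FreeMonoid.of y * FreeMonoid.of x ∧
    b = FreeMonoid.of y * FreeMonoid.of x * FreeMonoid.of y) ∨
  (∃ x y : V, E x y ∧ ¬ E y x ∧
    a = FreeMonoid.of x * FreeMonoid.of y * FreeMonoid.of x ∧
    b = FreeMonoid.of x * FreeMonoid.of y) ∨
  (∃ x y : V, E x y ∧ E y x ∧
    a = FreeMonoid.of x * FreeMonoid.of y * FreeMonoid.of x ∧
    b = FreeMonoid.of y * FreeMonoid.of x * FreeMonoid.of y)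

/-- The congruence on the free monoid generated by the Hecke-Kiselman relations. -/
def HKCon {V : Type*} (E : V → V → Prop) : Con (FreeMonoid V) := conGen (HKRel E)

/-- The Hecke-Kiselman monoid of the directed graph `(V, E)`. -/
def HK {V : Type*} (E : V → V → Prop) := (HKCon E).Quotient

instance {V : Type*} (E : V → V → Prop) : Monoid (HK E) :=
  inferInstanceAs (Monoid (HKCon E).Quotient)

/-- The canonical quotient map. -/
def HKmk {V : Type*} (E : V → V → Prop) : FreeMonoid V →* HK E := (HKCon E).mk'

/-- The content of an element: vertices occurring in some representing word. -/
def elemContent {V : Type*} (E : V → V → Prop) (x : HK E) : Set V :=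
  {v | ∃ w : FreeMonoid V, HKmk E w = x ∧ v ∈ FreeMonoid.toList w}

namespace HKP
open FreeMonoid

variable {V : Type*} {E : V → V → Prop}

lemma hkc_of {a b : FreeMonoid V} (h : HKRel E a b) : HKCon E a b :=
  ConGen.Rel.of a b h

lemma hkc_idem (x : V) : HKCon E (of x * of x) (of x) :=
  hkc_of (Or.inl ⟨x, rfl, rfl⟩)

lemma hkc_comm {x y : V} (hxy : x ≠ y) (h1 : ¬ E x y) (h2 : ¬ E y x) :
    HKCon E (of x * of y) (of y * of x) :=
  hkc_of (Or.inr (Or.inl ⟨x, y, hxy, h1, h2, rfl, rfl⟩))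

lemma hkc_xyx {x y : V} (h : E x y) (h' : ¬ E y x) :
    HKCon E (of x * of y * of x) (of x * of y) :=
  hkc_of (Or.inr (Or.inr (Or.inr (Or.inl ⟨x, y, h, h', rfl, rfl⟩))))

lemma hkc_yxy {x y : V} (h : E x y) (h' : ¬ E y x) :
    HKCon E (of x * of y * of x) (of y * of x * of y) :=
  hkc_of (Or.inr (Or.inr (Or.inl ⟨x, y, h, h', rfl, rfl⟩)))

/-- left-multiplication congruence -/
lemma cmul_left (X : FreeMonoid V) {a b : FreeMonoid V} (h : HKCon E a b) :
    HKCon E (X * a) (X * b) := (HKCon E).mul ((HKCon E).refl X) h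

lemma cmul_right (X : FreeMonoid V) {a b : FreeMonoid V} (h : HKCon E a b) :
    HKCon E (a * X) (b * X) := (HKCon E).mul h ((HKCon E).refl X)

/-- strong right absorption: `m` absorbs `v` on the right across any interleaving tail -/
def SAbs (E : V → V → Prop) (v : V) (m : FreeMonoid V) : Prop :=
  ∀ t : FreeMonoid V, HKCon E (m * t * of v) (m * t)

lemma SAbs.mono {v : V} {m : FreeMonoid V} (h : SAbs E v m) (a : FreeMonoid V) :
    SAbs E v (a * m) := by
  intro t
  have := cmul_left (E := E) a (h t)
  simpa [mul_assoc] using this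

lemma absorb_aux {v : V} {m : FreeMonoid V}
    (hz : ∀ z, E z v → SAbs E z m) (p : FreeMonoid V) :
    ∀ q : List V, HKCon E (m * p * of v * ofList q * of v) (m * p * of v * ofList q) := by
  intro q
  induction q using List.reverseRecOn with
  | nil =>
    have := cmul_left (E := E) (m * p) (hkc_idem v)
    simpa [mul_assoc] using this
  | append_singleton q z ih =>
    by_cases hzv : z = v
    · subst hzv
      -- X z z ≈ X z by idempotency
      have := cmul_left (E := E) (m * p * of z * ofList q) (hkc_idem z)
      simpa [mul_assoc] using this
    · by_cases hEzv : E z v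
      · -- in-neighbour: delete z using SAbs, absorb v by ih, reinsert z
        have hdel : HKCon E (m * (p * of v * ofList q) * of z) (m * (p * of v * ofList q)) :=
          hz z hEzv (p * of v * ofList q)
        have h1 : HKCon E (m * (p * of v * ofList q) * of z * of v)
            (m * (p * of v * ofList q) * of v) := cmul_right _ hdel
        have h2 : HKCon E (m * (p * of v * ofList q) * of v) (m * (p * of v * ofList q)) := by
          simpa [mul_assoc] using ih
        have h3 : HKCon E _ _ := (h1.trans h2).trans ((HKCon E).symm hdel)
        simpa [mul_assoc] using h3
      · by_cases hEvz : E v z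
        · -- out-neighbour: duplicate v via ih, contract v z v ≈ v z, remove extra v via ih
          have hvz' : ¬ E z v := hEzv
          have ih' : HKCon E (m * p * of v * ofList q * of v) (m * p * of v * ofList q) := ih
          have h1 : HKCon E (m * p * of v * ofList q * of z * of v)
              (m * p * of v * ofList q * of v * of z * of v) := by
            have := cmul_right (E := E) (of z * of v) ((HKCon E).symm ih')
            simpa [mul_assoc] using this
          have h2 : HKCon E (m * p * of v * ofList q * of v * of z * of v)
              (m * p * of v * ofList q * of v * of z) := by
            have := cmul_left (E := E) (m * p * of v * ofList q) (hkc_xyx hEvz hvz')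
            simpa [mul_assoc] using this
          have h3 : HKCon E (m * p * of v * ofList q * of v * of z)
              (m * p * of v * ofList q * of z) := cmul_right _ ih'
          have h4 : HKCon E _ _ := (h1.trans h2).trans h3
          simpa [mul_assoc] using h4
        · -- commuting letter
          have hc : HKCon E (of z * of v) (of v * of z) :=
            hkc_comm hzv hEzv hEvz
          have h1 : HKCon E (m * p * of v * ofList q * (of z * of v))
              (m * p * of v * ofList q * (of v * of z)) := cmul_left _ hc
          have h2 : HKCon E (m * p * of v * ofList q * of v * of z)
              (m * p * of v * ofList q * of z) := cmul_right _ ih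
          have h3 : HKCon E (m * p * of v * ofList q * (of v * of z))
              (m * p * of v * ofList q * of z) := by simpa [mul_assoc] using h2
          have h4 : HKCon E _ _ := h1.trans h3
          simpa [mul_assoc] using h4


lemma absorb_mem {v : V} {m : FreeMonoid V}
    (hz : ∀ z, E z v → SAbs E z m) {m' : FreeMonoid V} (hv : v ∈ toList m') :
    HKCon E (m * m' * of v) (m * m') := by
  obtain ⟨p, q, hpq⟩ := List.append_of_mem hv
  have hm' : m' = ofList p * of v * ofList q := by
    conv_lhs => rw [← ofList_toList m', hpq]
    rw [show p ++ v :: q = p ++ [v] ++ q by simp, ofList_append, ofList_append,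
      ofList_singleton]
  subst hm'
  have := absorb_aux (E := E) hz (ofList p) q
  simpa [mul_assoc] using this

lemma sabs_step {v : V} {m w : FreeMonoid V}
    (hz : ∀ z, E z v → SAbs E z m) (hvw : v ∈ toList w) : SAbs E v (m * w) := by
  intro t
  have hv : v ∈ toList (w * t) := by
    rw [toList_mul, List.mem_append]; exact Or.inl hvw
  have := absorb_mem (E := E) hz hv
  simpa [mul_assoc] using this

variable [Fintype V]

lemma sabs_card (hbidir : ∀ x y, ¬ (E x y ∧ E y x)) (hloop : ∀ x, ¬ E x x)
    (hacyclic : ∀ x : V, ¬ Relation.TransGen E x x)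
    {w : FreeMonoid V} (hw : ∀ x, x ∈ toList w) :
    ∀ (n : ℕ) (S : Finset V), S.card = n → (∀ u ∈ S, ∀ z, E z u → z ∈ S) →
      ∀ v ∈ S, SAbs E v (w ^ n) := by
  intro n
  induction n with
  | zero =>
    intro S hcard _ v hv
    rw [Finset.card_eq_zero] at hcard
    simp [hcard] at hv
  | succ n ih =>
    classical
    intro S hcard hclosed v hv
    -- find a sink of S
    have wfR : WellFounded (fun a b : V => Relation.TransGen E b a) := by
      haveI : IsIrrefl V (fun a b : V => Relation.TransGen E b a) :=
        ⟨fun a h => hacyclic a h⟩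
      haveI : IsTrans V (fun a b : V => Relation.TransGen E b a) :=
        ⟨fun a b c h1 h2 => h2.trans h1⟩
      exact Finite.wellFounded_of_trans_of_irrefl _
    have hSne : (↑S : Set V).Nonempty := ⟨v, hv⟩
    obtain ⟨x, hxS, hxmin⟩ := wfR.has_min (↑S) hSne
    have hsink : ∀ u ∈ S, ¬ E x u := fun u hu h =>
      hxmin u hu (Relation.TransGen.single h)
    set S' := S.erase x with hS'
    have hxS' : x ∈ S := hxS
    have hcard' : S'.card = n := by
      rw [hS', Finset.card_erase_of_mem hxS', hcard]; rfl
    have hclosed' : ∀ u ∈ S', ∀ z, E z u → z ∈ S' := by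
      intro u hu z hzu
      have huS : u ∈ S := Finset.mem_of_mem_erase hu
      have hzS : z ∈ S := hclosed u huS z hzu
      refine Finset.mem_erase.2 ⟨?_, hzS⟩
      rintro rfl
      exact hsink u huS hzu
    by_cases hvx : v = x
    · subst hvx
      have hzsabs : ∀ z, E z v → SAbs E z (w ^ n) := by
        intro z hzv
        have hzS : z ∈ S := hclosed v hv z hzv
        have hzne : z ≠ v := by rintro rfl; exact hloop z hzv
        exact ih S' hcard' hclosed' z (Finset.mem_erase.2 ⟨hzne, hzS⟩)
      have := sabs_step (E := E) hzsabs (hw v)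
      rwa [← pow_succ] at this
    · have hvS' : v ∈ S' := Finset.mem_erase.2 ⟨hvx, hv⟩
      have := (ih S' hcard' hclosed' v hvS').mono w
      rwa [← pow_succ'] at this

lemma right_absorb (hbidir : ∀ x y, ¬ (E x y ∧ E y x)) (hloop : ∀ x, ¬ E x x)
    (hacyclic : ∀ x : V, ¬ Relation.TransGen E x x)
    {w : FreeMonoid V} (hw : ∀ x, x ∈ toList w) :
    ∀ u : FreeMonoid V, HKCon E (w ^ Fintype.card V * u) (w ^ Fintype.card V) := by
  have hs : ∀ v : V, SAbs E v (w ^ Fintype.card V) := fun v =>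
    sabs_card hbidir hloop hacyclic hw (Fintype.card V) Finset.univ rfl
      (fun _ _ z _ => Finset.mem_univ z) v (Finset.mem_univ v)
  intro u
  have key : ∀ l : List V, HKCon E (w ^ Fintype.card V * ofList l) (w ^ Fintype.card V) := by
    intro l
    induction l using List.reverseRecOn with
    | nil => simpa using (HKCon E).refl (w ^ Fintype.card V)
    | append_singleton l z ihl =>
      have h1 : HKCon E (w ^ Fintype.card V * ofList l * of z) (w ^ Fintype.card V * ofList l) :=
        hs z (ofList l)
      have h2 : HKCon E _ _ := h1.trans ihl
      simpa [mul_assoc, ofList_append] using h2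
  have := key (toList u)
  simpa [ofList_toList] using this


/-- word reversal -/
def rv (a : FreeMonoid V) : FreeMonoid V := ofList (toList a).reverse

lemma rv_mul (a b : FreeMonoid V) : rv (a * b) = rv b * rv a := by
  simp [rv, toList_mul, ofList_append]

lemma rv_of (x : V) : rv (of x) = of x := by
  simp [rv]

lemma rv_rv (a : FreeMonoid V) : rv (rv a) = a := by
  simp [rv]

lemma rv_one : rv (1 : FreeMonoid V) = 1 := rfl

lemma rv_pow (a : FreeMonoid V) (n : ℕ) : rv (a ^ n) = rv a ^ n := by
  induction n with
  | zero => simp [rv_one]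
  | succ n ih => rw [pow_succ, rv_mul, ih, pow_succ']

lemma mem_rv {x : V} {a : FreeMonoid V} (h : x ∈ toList a) : x ∈ toList (rv a) := by
  simp [rv, h]

lemma hkc_rev (hbidir : ∀ x y, ¬ (E x y ∧ E y x)) {a b : FreeMonoid V}
    (h : HKCon E a b) : HKCon (fun x y => E y x) (rv a) (rv b) := by
  induction h with
  | of a b hab =>
    rcases hab with ⟨x, ha, hb⟩ | ⟨x, y, hxy, h1, h2, ha, hb⟩ |
      ⟨x, y, h1, h2, ha, hb⟩ | ⟨x, y, h1, h2, ha, hb⟩ | ⟨x, y, h1, h2, ha, hb⟩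
    · subst ha; subst hb
      simp only [rv_mul, rv_of]
      exact hkc_idem x
    · subst ha; subst hb
      simp only [rv_mul, rv_of]
      exact hkc_comm (E := fun x y => E y x) hxy.symm h1 h2
    · subst ha; subst hb
      simp only [rv_mul, rv_of]
      exact ((HKCon _).symm (hkc_yxy (E := fun x y => E y x) h1 h2))
    · subst ha; subst hb
      simp only [rv_mul, rv_of]
      exact ((HKCon _).symm (hkc_yxy (E := fun x y => E y x) h1 h2)).trans
        (hkc_xyx (E := fun x y => E y x) h1 h2)
    · exact absurd ⟨h1, h2⟩ (hbidir x y)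
  | refl a => exact (HKCon _).refl _
  | symm _ ih => exact (HKCon _).symm ih
  | trans _ _ ih1 ih2 => exact ih1.trans ih2
  | mul _ _ ih1 ih2 =>
    rw [rv_mul, rv_mul]
    exact (HKCon _).mul ih2 ih1

lemma left_absorb (hbidir : ∀ x y, ¬ (E x y ∧ E y x)) (hloop : ∀ x, ¬ E x x)
    (hacyclic : ∀ x : V, ¬ Relation.TransGen E x x)
    {w : FreeMonoid V} (hw : ∀ x, x ∈ toList w) :
    ∀ u : FreeMonoid V, HKCon E (u * w ^ Fintype.card V) (w ^ Fintype.card V) := by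
  intro u
  set E' : V → V → Prop := fun x y => E y x with hE'
  have hbidir' : ∀ x y, ¬ (E' x y ∧ E' y x) := fun x y h => hbidir y x ⟨h.1, h.2⟩
  have hloop' : ∀ x, ¬ E' x x := hloop
  have hacyclic' : ∀ x : V, ¬ Relation.TransGen E' x x := by
    intro x hx
    exact hacyclic x (by rwa [show E' = Function.swap E from rfl,
      Relation.transGen_swap] at hx)
  have hw' : ∀ x, x ∈ toList (rv w) := fun x => mem_rv (hw x)
  have h := right_absorb (E := E') hbidir' hloop' hacyclic' hw' (rv u)
  have h2 := hkc_rev (E := E') hbidir' h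
  have e1 : rv (rv w ^ Fintype.card V * rv u) = u * w ^ Fintype.card V := by
    rw [rv_mul, rv_pow, rv_rv, rv_rv]
  have e2 : rv (rv w ^ Fintype.card V) = w ^ Fintype.card V := by
    rw [rv_pow, rv_rv]
  rw [e1, e2] at h2
  exact h2

end HKP

theorem hk_acyclic_power_is_zero' {V : Type*} [Fintype V] (E : V → V → Prop)
    (hbidir : ∀ x y, ¬ (E x y ∧ E y x)) (hloop : ∀ x, ¬ E x x)
    (hacyclic : ∀ x : V, ¬ Relation.TransGen E x x)
    (w : FreeMonoid V) (hw : {x | x ∈ FreeMonoid.toList w} = Set.univ) :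
    ∀ s : (HKCon E).Quotient,
      ((HKCon E).mk' w) ^ (Fintype.card V) * s = ((HKCon E).mk' w) ^ (Fintype.card V) ∧
      s * ((HKCon E).mk' w) ^ (Fintype.card V) = ((HKCon E).mk' w) ^ (Fintype.card V) := by
  have hw' : ∀ x, x ∈ FreeMonoid.toList w := Set.eq_univ_iff_forall.1 hw
  intro s
  obtain ⟨u, rfl⟩ := Con.mk'_surjective (c := HKCon E) s
  constructor
  · have h := HKP.right_absorb (E := E) hbidir hloop hacyclic hw' u
    have h' : (HKCon E).mk' (w ^ Fintype.card V * u) = (HKCon E).mk' (w ^ Fintype.card V) :=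
      (HKCon E).eq.2 h
    simpa only [map_mul, map_pow] using h'
  · have h := HKP.left_absorb (E := E) hbidir hloop hacyclic hw' u
    have h' : (HKCon E).mk' (u * w ^ Fintype.card V) = (HKCon E).mk' (w ^ Fintype.card V) :=
      (HKCon E).eq.2 h
    simpa only [map_mul, map_pow] using h'

/-- If a finite graph with at most one directed edge between any pair of vertices contains
no oriented cycles and `w` is a word of full content, then `[w]^n`, where `n` is the number
of vertices, is the zero (absorbing) element of the Hecke-Kiselman monoid. -/
theorem hk_acyclic_power_is_zero {V : Type*} [Fintype V] (E : V → V → Prop)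
    (hbidir : ∀ x y, ¬ (E x y ∧ E y x)) (hloop : ∀ x, ¬ E x x)
    (hacyclic : ∀ x : V, ¬ Relation.TransGen E x x)
    (w : FreeMonoid V) (hw : {x | x ∈ FreeMonoid.toList w} = Set.univ) :
    ∀ s : HK E, (HKmk E w) ^ (Fintype.card V) * s = (HKmk E w) ^ (Fintype.card V) ∧
      s * (HKmk E w) ^ (Fintype.card V) = (HKmk E w) ^ (Fintype.card V) := by
  exact hk_acyclic_power_is_zero' E hbidir hloop hacyclic w hw
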